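/- Equip P = k[x₁,x₂,x₃] with the Poisson bracket {x₁,x₂} = 0, {x₂,x₃} = 3x₁², {x₃,x₁} = 0. Then for an invertible matrix M = (a_{ij}): (i) φ_M is a graded Poisson automorphism of P if and only if a₁₂ = a₁₃ = 0 and a₁₁² = a₂₂a₃₃ − a₂₃a₃₂; (ii) φ_M is a Poisson reflection of P if and only if M = [[−1,0,0],[a,1,0],[d,0,1]] for some a, d ∈ k. -/

import Mathlib

open MvPolynomial

/-- The bracket on `k[x₁,x₂,x₃]` determined by the values `p12 = {x₁,x₂}`, `p23 = {x₂,x₃}`,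
`p31 = {x₃,x₁}` via `{f,g} = Σ_{i<j} (∂f/∂xᵢ·∂g/∂xⱼ − ∂f/∂xⱼ·∂g/∂xᵢ)·{xᵢ,xⱼ}`. -/
noncomputable def jacBracket {k : Type*} [Field k] (p12 p23 p31 : MvPolynomial (Fin 3) k)
    (f g : MvPolynomial (Fin 3) k) : MvPolynomial (Fin 3) k :=
  (pderiv 0 f * pderiv 1 g - pderiv 1 f * pderiv 0 g) * p12 +
    (pderiv 1 f * pderiv 2 g - pderiv 2 f * pderiv 1 g) * p23 +
    (pderiv 2 f * pderiv 0 g - pderiv 0 f * pderiv 2 g) * p31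

/-- The graded algebra endomorphism `φ_M` of `k[x₁,x₂,x₃]` with `φ_M(xᵢ) = Σⱼ M i j · xⱼ`. -/
noncomputable def phiM {k : Type*} [Field k] (M : Matrix (Fin 3) (Fin 3) k) :
    MvPolynomial (Fin 3) k →ₐ[k] MvPolynomial (Fin 3) k :=
  aeval fun i => ∑ j, C (M i j) * X j

/-- `φ_M` is a graded Poisson automorphism (for invertible `M`) iff it preserves the bracket. -/
def IsPoissonAut {k : Type*} [Field k]
    (br : MvPolynomial (Fin 3) k → MvPolynomial (Fin 3) k → MvPolynomial (Fin 3) k)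
    (M : Matrix (Fin 3) (Fin 3) k) : Prop :=
  ∀ f g, phiM M (br f g) = br (phiM M f) (phiM M g)

/-- `φ_M` is a Poisson reflection: a graded Poisson automorphism of finite order whose
eigenvalues are `1, 1, ξ` for some root of unity `ξ ≠ 1`. -/
def IsPoissonReflection {k : Type*} [Field k]
    (br : MvPolynomial (Fin 3) k → MvPolynomial (Fin 3) k → MvPolynomial (Fin 3) k)
    (M : Matrix (Fin 3) (Fin 3) k) : Prop :=
  IsPoissonAut br M ∧ (∃ n, 0 < n ∧ M ^ n = 1) ∧
    ∃ ξ : k, ξ ≠ 1 ∧ (∃ m, 0 < m ∧ ξ ^ m = 1) ∧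
      M.charpoly = (Polynomial.X - 1) ^ 2 * (Polynomial.X - Polynomial.C ξ)

section Aux

variable {k : Type*} [Field k]

lemma phiM_X (M : Matrix (Fin 3) (Fin 3) k) (i : Fin 3) :
    phiM M (X i) = C (M i 0) * X 0 + C (M i 1) * X 1 + C (M i 2) * X 2 := by
  simp [phiM, Fin.sum_univ_three]

lemma br_C_left (p12 p23 p31 g : MvPolynomial (Fin 3) k) (a : k) :
    jacBracket p12 p23 p31 (C a) g = 0 := by simp [jacBracket]

lemma br_C_right (p12 p23 p31 f : MvPolynomial (Fin 3) k) (a : k) :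
    jacBracket p12 p23 p31 f (C a) = 0 := by simp [jacBracket]

lemma br_add_left (p12 p23 p31 f1 f2 g : MvPolynomial (Fin 3) k) :
    jacBracket p12 p23 p31 (f1 + f2) g
      = jacBracket p12 p23 p31 f1 g + jacBracket p12 p23 p31 f2 g := by
  simp [jacBracket]; ring

lemma br_add_right (p12 p23 p31 f g1 g2 : MvPolynomial (Fin 3) k) :
    jacBracket p12 p23 p31 f (g1 + g2)
      = jacBracket p12 p23 p31 f g1 + jacBracket p12 p23 p31 f g2 := by
  simp [jacBracket]; ring

lemma br_mul_left (p12 p23 p31 f1 f2 g : MvPolynomial (Fin 3) k) :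
    jacBracket p12 p23 p31 (f1 * f2) g
      = jacBracket p12 p23 p31 f1 g * f2 + f1 * jacBracket p12 p23 p31 f2 g := by
  simp [jacBracket, pderiv_mul]; ring

lemma br_mul_right (p12 p23 p31 f g1 g2 : MvPolynomial (Fin 3) k) :
    jacBracket p12 p23 p31 f (g1 * g2)
      = jacBracket p12 p23 p31 f g1 * g2 + g1 * jacBracket p12 p23 p31 f g2 := by
  simp [jacBracket, pderiv_mul]; ring

lemma base_case3 (M : Matrix (Fin 3) (Fin 3) k) (h1 : M 0 1 = 0) (h2 : M 0 2 = 0)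
    (h3 : M 0 0 ^ 2 = M 1 1 * M 2 2 - M 1 2 * M 2 1) (n i : Fin 3) :
    phiM M (jacBracket 0 (3 * X 0 ^ 2) 0 (X n) (X i))
      = jacBracket 0 (3 * X 0 ^ 2) 0 (phiM M (X n)) (phiM M (X i)) := by
  have h3' : (C (M 0 0) ^ 2 : MvPolynomial (Fin 3) k)
      = C (M 1 1) * C (M 2 2) - C (M 1 2) * C (M 2 1) := by
    rw [← C_pow, ← C_mul, ← C_mul, ← C_sub, h3]
  fin_cases n <;> fin_cases i <;>
    simp [jacBracket, phiM_X, pderiv_X, Pi.single_apply, h1, h2, map_ofNat] <;>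
    first
      | (left; ring)
      | linear_combination (3 * X 0 ^ 2 : MvPolynomial (Fin 3) k) * h3'
      | linear_combination (-(3 * X 0 ^ 2) : MvPolynomial (Fin 3) k) * h3'

lemma aut_of3 (M : Matrix (Fin 3) (Fin 3) k) (h1 : M 0 1 = 0) (h2 : M 0 2 = 0)
    (h3 : M 0 0 ^ 2 = M 1 1 * M 2 2 - M 1 2 * M 2 1) :
    IsPoissonAut (jacBracket 0 (3 * X 0 ^ 2) 0) M := by
  have key : ∀ (n : Fin 3) (g : MvPolynomial (Fin 3) k),
      phiM M (jacBracket 0 (3 * X 0 ^ 2) 0 (X n) g)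
        = jacBracket 0 (3 * X 0 ^ 2) 0 (phiM M (X n)) (phiM M g) := by
    intro n g
    induction g using MvPolynomial.induction_on with
    | C a => simp [br_C_right]
    | add p q hp hq => rw [br_add_right, map_add, hp, hq, map_add, br_add_right]
    | mul_X p i hp =>
        rw [br_mul_right, map_add, map_mul, map_mul, hp, base_case3 M h1 h2 h3,
          map_mul, br_mul_right]
  intro f g
  induction f using MvPolynomial.induction_on with
  | C a => simp [br_C_left]
  | add p q hp hq => rw [br_add_left, map_add, hp, hq, map_add, br_add_left]
  | mul_X p i hp =>
      rw [br_mul_left, map_add, map_mul, map_mul, hp, key, map_mul, br_mul_left]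

lemma aut_iff3 [CharZero k] (M : Matrix (Fin 3) (Fin 3) k) :
    IsPoissonAut (jacBracket 0 (3 * X 0 ^ 2) 0) M ↔
      M 0 1 = 0 ∧ M 0 2 = 0 ∧ M 0 0 ^ 2 = M 1 1 * M 2 2 - M 1 2 * M 2 1 := by
  constructor
  · intro h
    have key := h (X 1) (X 2)
    simp [jacBracket, phiM_X, pderiv_X, Pi.single_apply, map_ofNat] at key
    have e1 := congrArg (eval ![(0:k),1,0]) key
    have e2 := congrArg (eval ![(0:k),0,1]) key
    have e0 := congrArg (eval ![(1:k),0,0]) key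
    simp [Matrix.cons_val_zero, Matrix.cons_val_one] at e0 e1 e2
    exact ⟨e1, e2, by linear_combination e0 / 3⟩
  · rintro ⟨h1, h2, h3⟩
    exact aut_of3 M h1 h2 h3

open Polynomial in
lemma charpoly_fin3 (M : Matrix (Fin 3) (Fin 3) k) :
    M.charpoly = Polynomial.X^3 - Polynomial.C (M 0 0 + M 1 1 + M 2 2) * Polynomial.X^2
      + Polynomial.C (M 0 0 * M 1 1 - M 0 1 * M 1 0 + M 0 0 * M 2 2 - M 0 2 * M 2 0
            + M 1 1 * M 2 2 - M 1 2 * M 2 1) * Polynomial.X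
      - Polynomial.C (M.det) := by
  rw [Matrix.charpoly, Matrix.det_fin_three, Matrix.det_fin_three]
  simp [Matrix.charmatrix_apply, Matrix.diagonal]
  ring

lemma cubic_coeffs {t s d t' s' d' : k}
    (h : (Polynomial.X : Polynomial k)^3 - Polynomial.C t * Polynomial.X^2
          + Polynomial.C s * Polynomial.X - Polynomial.C d
        = Polynomial.X^3 - Polynomial.C t' * Polynomial.X^2
          + Polynomial.C s' * Polynomial.X - Polynomial.C d') :
    t = t' ∧ s = s' ∧ d = d' := by
  have h2 := congrArg (fun p => Polynomial.coeff p 2) h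
  have h1 := congrArg (fun p => Polynomial.coeff p 1) h
  have h0 := congrArg (fun p => Polynomial.coeff p 0) h
  simp only [Polynomial.coeff_sub, Polynomial.coeff_add, Polynomial.coeff_X_pow,
    Polynomial.coeff_C_mul, Polynomial.coeff_C, Polynomial.coeff_X] at h2 h1 h0
  norm_num at h2 h1 h0
  exact ⟨h2, h1, h0⟩

lemma unip (B : Matrix (Fin 2) (Fin 2) k) (hN : (B - 1) * (B - 1) = 0) (p : ℕ) :
    B ^ p = 1 + (p : k) • (B - 1) := by
  induction p with
  | zero => simp
  | succ p ih =>
    have hB : B = 1 + (B - 1) := by abel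
    rw [pow_succ, ih]
    nth_rewrite 2 [hB]
    rw [mul_add, add_mul, add_mul, one_mul, mul_one, smul_mul_assoc, hN]
    push_cast
    rw [add_smul, one_smul]
    simp
    abel

lemma blockpow (M : Matrix (Fin 3) (Fin 3) k) (h1 : M 0 1 = 0) (h2 : M 0 2 = 0)
    (B : Matrix (Fin 2) (Fin 2) k) (hB : B = !![M 1 1, M 1 2; M 2 1, M 2 2]) (p : ℕ) :
    (M ^ p) 1 1 = (B ^ p) 0 0 ∧ (M ^ p) 1 2 = (B ^ p) 0 1 ∧
      (M ^ p) 2 1 = (B ^ p) 1 0 ∧ (M ^ p) 2 2 = (B ^ p) 1 1 ∧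
      (M ^ p) 0 1 = 0 ∧ (M ^ p) 0 2 = 0 := by
  induction p with
  | zero => simp [Matrix.one_apply]
  | succ p ih =>
    obtain ⟨e1, e2, e3, e4, e5, e6⟩ := ih
    rw [pow_succ, pow_succ]
    refine ⟨?_, ?_, ?_, ?_, ?_, ?_⟩ <;>
      simp [Matrix.mul_apply, Fin.sum_univ_three, Fin.sum_univ_two, e1, e2, e3, e4, e5, e6,
        h1, h2, hB]

end Aux

/-- Case `{x₁,x₂} = 0`, `{x₂,x₃} = 3x₁²`, `{x₃,x₁} = 0`. -/
theorem stmt_3 {k : Type*} [Field k] [IsAlgClosed k] [CharZero k]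
    (M : Matrix (Fin 3) (Fin 3) k) (hM : IsUnit M.det) :
    (IsPoissonAut (jacBracket 0 (3 * X 0 ^ 2) 0) M ↔
      M 0 1 = 0 ∧ M 0 2 = 0 ∧ M 0 0 ^ 2 = M 1 1 * M 2 2 - M 1 2 * M 2 1) ∧
    (IsPoissonReflection (jacBracket 0 (3 * X 0 ^ 2) 0) M ↔
      ∃ a d : k, M = !![-1, 0, 0; a, 1, 0; d, 0, 1]) := by
  refine ⟨aut_iff3 M, ?_, ?_⟩
  · rintro ⟨hAut, ⟨n, hn, hMn⟩, ξ, hξ1, ⟨m, hm, hξm⟩, hcp⟩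
    obtain ⟨h1, h2, h3⟩ := (aut_iff3 M).mp hAut
    -- charpoly coefficient comparison
    rw [charpoly_fin3] at hcp
    have e : ((Polynomial.X : Polynomial k) - 1)^2 * (Polynomial.X - Polynomial.C ξ)
        = Polynomial.X^3 - Polynomial.C (2+ξ) * Polynomial.X^2
          + Polynomial.C (1+2*ξ) * Polynomial.X - Polynomial.C ξ := by
      simp only [map_add, map_mul, map_one, map_ofNat]
      ring
    rw [e] at hcp
    obtain ⟨E2, E1, E0⟩ := cubic_coeffs hcp
    rw [Matrix.det_fin_three, h1, h2] at E0
    rw [h1, h2] at E1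
    have E1' : M 0 0 * M 1 1 + M 0 0 * M 2 2 + M 0 0 ^ 2 = 1 + 2 * ξ := by
      linear_combination E1 + h3
    have E0' : M 0 0 ^ 3 = ξ := by
      linear_combination E0 + M 0 0 * h3
    have hfac : (M 0 0 - 1) ^ 3 * (M 0 0 + 1) = 0 := by
      linear_combination (M 0 0 - 2) * E0' - M 0 0 * E2 + E1'
    have ha : M 0 0 = -1 := by
      rcases mul_eq_zero.mp hfac with h | h
      · exfalso
        have h' : M 0 0 = 1 := by
          have := pow_eq_zero_iff (n := 3) (by norm_num) |>.mp h
          exact sub_eq_zero.mp this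
        exact hξ1 (by rw [h'] at E0'; linear_combination -E0')
      · exact eq_neg_of_add_eq_zero_left h
    rw [ha] at E0' E2 h3
    have hξ : ξ = -1 := by linear_combination -E0'
    rw [hξ] at E2
    have htr : M 1 1 + M 2 2 = 2 := by linear_combination E2
    have hdet : M 1 1 * M 2 2 - M 1 2 * M 2 1 = 1 := by linear_combination -h3
    set B : Matrix (Fin 2) (Fin 2) k := !![M 1 1, M 1 2; M 2 1, M 2 2] with hB
    have hN : (B - 1) * (B - 1) = 0 := by
      ext i j
      fin_cases i <;> fin_cases j <;>
        simp [hB, Matrix.mul_apply, Fin.sum_univ_two, Matrix.one_apply, Matrix.sub_apply] <;>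
        first
          | linear_combination M 1 1 * htr - hdet
          | linear_combination M 2 2 * htr - hdet
          | linear_combination M 1 2 * htr
          | linear_combination M 2 1 * htr
    obtain ⟨e1, e2, e3, e4, -, -⟩ := blockpow M h1 h2 B hB n
    rw [hMn] at e1 e2 e3 e4
    have hBn : B ^ n = 1 := by
      ext i j
      fin_cases i <;> fin_cases j <;>
        simp [Matrix.one_apply] at e1 e2 e3 e4 ⊢ <;>
        first
          | exact e1.symm
          | exact e2.symm
          | exact e3.symm
          | exact e4.symm
    have hsm : (n : k) • (B - 1) = 0 := by
      have h' := unip B hN n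
      rw [hBn] at h'
      exact (left_eq_add.mp h')
    have hB1 : B = 1 := by
      have hn' : (n : k) ≠ 0 := Nat.cast_ne_zero.mpr hn.ne'
      have := (smul_eq_zero.mp hsm).resolve_left hn'
      exact sub_eq_zero.mp this
    have m11 : M 1 1 = 1 := by
      have := congrFun (congrFun hB1 0) 0; simpa [hB, Matrix.one_apply] using this
    have m12 : M 1 2 = 0 := by
      have := congrFun (congrFun hB1 0) 1; simpa [hB, Matrix.one_apply] using this
    have m21 : M 2 1 = 0 := by
      have := congrFun (congrFun hB1 1) 0; simpa [hB, Matrix.one_apply] using this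
    have m22 : M 2 2 = 1 := by
      have := congrFun (congrFun hB1 1) 1; simpa [hB, Matrix.one_apply] using this
    refine ⟨M 1 0, M 2 0, ?_⟩
    ext i j
    fin_cases i <;> fin_cases j <;> simp [h1, h2, ha, m11, m12, m21, m22]
  · rintro ⟨a, d, rfl⟩
    refine ⟨aut_of3 _ (by simp) (by simp) (by norm_num; change (1:k) = 1 - 0 * 0; ring), ⟨2, by norm_num, ?_⟩,
      -1, by norm_num, ⟨2, by norm_num, by ring⟩, ?_⟩
    · ext i j
      fin_cases i <;> fin_cases j <;>
        simp [pow_two, Matrix.mul_apply, Fin.sum_univ_three, Matrix.one_apply]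
    · rw [charpoly_fin3, Matrix.det_fin_three]
      simp
      ring
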